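/- Let K be a loop-free unital free augmented directed complex, let x = (x_0^−, x_0^+ | x_1^−, x_1^+ | …) be a member of νK, let q ≥ 0 and let α be a sign. Then each of the four chains x_q^−, x_q^+, g_q^−(x) and g_q^+(x) is a sum of distinct basis elements, i.e. all of its coordinates with respect to the distinguished basis lie in {0, 1}. -/

import Mathlib

open Finsupp

/-- A free augmented directed complex, encoded by its distinguished graded basis:
`B` is the set of basis elements, `dim` the dimension function, `bd a` the boundary
chain of a basis element `a`, and `eps` the augmentation (supported in dimension 0). -/
structure FADC where
  B : Type
  dim : B → ℕ
  bd : B → (B →₀ ℤ)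
  eps : B → ℤ
  bd_dim : ∀ a b, b ∈ (bd a).support → dim b + 1 = dim a
  eps_dim : ∀ b, 0 < dim b → eps b = 0
  bd_bd : ∀ a : B, ((bd a).sum fun b n => n • bd b) = 0
  eps_bd : ∀ a : B, ((bd a).sum fun b n => n * eps b) = 0

namespace FADC

variable (K : FADC)

/-- The boundary homomorphism `∂`, extended to chains. -/
noncomputable def bdc (c : K.B →₀ ℤ) : K.B →₀ ℤ := c.sum fun b n => n • K.bd b

/-- The augmentation `ε`, extended to chains. -/
noncomputable def epsc (c : K.B →₀ ℤ) : ℤ := c.sum fun b n => n * K.eps b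

/-- `∂⁺c`, the positive part of `∂c`. -/
noncomputable def bdp (c : K.B →₀ ℤ) : K.B →₀ ℤ := (K.bdc c).mapRange (fun n => max n 0) (by simp)

/-- `∂⁻c`, the negative part of `∂c`. -/
noncomputable def bdm (c : K.B →₀ ℤ) : K.B →₀ ℤ := (-K.bdc c).mapRange (fun n => max n 0) (by simp)

/-- `K` is unital if `ε((∂⁻)^q a) = ε((∂⁺)^q a) = 1` for every `q`-dimensional
basis element `a`. -/
def Unital : Prop := ∀ a : K.B,
  K.epsc (K.bdm^[K.dim a] (Finsupp.single a 1)) = 1 ∧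
  K.epsc (K.bdp^[K.dim a] (Finsupp.single a 1)) = 1

/-- `K` is loop-free if its basis elements admit a (strict) partial order such that
for every basis element `a` and every `r > 0`, the basis elements occurring in
`(∂⁻)^r a` strictly precede those occurring in `(∂⁺)^r a`. -/
def LoopFree : Prop :=
  ∃ lt : K.B → K.B → Prop, IsStrictOrder K.B lt ∧
    ∀ (a : K.B) (r : ℕ), 0 < r →
      ∀ b ∈ (K.bdm^[r] (Finsupp.single a 1)).support,
        ∀ b' ∈ (K.bdp^[r] (Finsupp.single a 1)).support, lt b b'

/-- `K` is atomic of dimension `n`. -/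
def Atomic (n : ℕ) : Prop :=
  (∀ b : K.B, K.dim b ≤ n) ∧
  (∃! g : K.B, K.dim g = n) ∧
  (∀ b : K.B, K.dim b < n → ∃ a : K.B, K.dim b < K.dim a ∧
    (b ∈ (K.bdm (Finsupp.single a 1)).support ∨ b ∈ (K.bdp (Finsupp.single a 1)).support))

/-- `g_q^α(x)`: given `x_q^- = xq` and `x_{q+1}^α = c`, this is
`x_q^- + ∂⁺a_1 + … + ∂⁺a_k` where `a_1, …, a_k` are the terms of `c`. -/
noncomputable def gch (xq c : K.B →₀ ℤ) : K.B →₀ ℤ :=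
  xq + c.sum fun b n => n • K.bdp (Finsupp.single b 1)

/-- The negative chains `⟨K⟩_q^- = (∂⁻)^{n-q} g` of the canonical atom. -/
noncomputable def atomNeg (g : K.B) (n q : ℕ) : K.B →₀ ℤ :=
  if q ≤ n then K.bdm^[n - q] (Finsupp.single g 1) else 0

/-- The positive chains `⟨K⟩_q^+ = (∂⁺)^{n-q} g` of the canonical atom. -/
noncomputable def atomPos (g : K.B) (n q : ℕ) : K.B →₀ ℤ :=
  if q ≤ n then K.bdp^[n - q] (Finsupp.single g 1) else 0

end FADC

/-- Membership in `νK`: the double sequence `(x_0^-, x_0^+ | x_1^-, x_1^+ | …)`,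
given by `xm` and `xp`, is a member of `νK`. -/
structure NuMem (K : FADC) (xm xp : ℕ → (K.B →₀ ℤ)) : Prop where
  dim_m : ∀ q, ∀ b ∈ (xm q).support, K.dim b = q
  dim_p : ∀ q, ∀ b ∈ (xp q).support, K.dim b = q
  nonneg_m : ∀ q b, 0 ≤ xm q b
  nonneg_p : ∀ q b, 0 ≤ xp q b
  fin : ∃ n, ∀ q, n < q → xm q = 0 ∧ xp q = 0
  eps_m : K.epsc (xm 0) = 1
  eps_p : K.epsc (xp 0) = 1
  bd_m : ∀ q, K.bdc (xm (q + 1)) = xp q - xm q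
  bd_p : ∀ q, K.bdc (xp (q + 1)) = xp q - xm q

/-- `K` together with the class `thin` of thin basis elements is an
`n`-dimensional opetopic directed complex. -/
structure IsODC (K : FADC) (thin : K.B → Prop) (n : ℕ) : Prop where
  atomic : K.Atomic n
  loopFree : K.LoopFree
  unital : K.Unital
  thin_pos : ∀ b, thin b → 0 < K.dim b
  bdp_basis : ∀ b : K.B, 0 < K.dim b →
    ∃ a : K.B, ¬ thin a ∧ K.bdp (Finsupp.single b 1) = Finsupp.single a 1
  bdm_thin : ∀ b : K.B, thin b →
    ∃ a : K.B, ¬ thin a ∧ K.bdm (Finsupp.single b 1) = Finsupp.single a 1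

/-- An opetopic directed complex is reduced if every thin basis element is `∂⁻a`
for some other basis element `a`. -/
def ODCReduced (K : FADC) (thin : K.B → Prop) : Prop :=
  ∀ b, thin b → ∃ a, a ≠ b ∧ K.bdm (Finsupp.single a 1) = Finsupp.single b 1

/-- A network: finite sets of edges and vertices with partially defined source and
target functions; input edges are those with no source, output edges those with no
target. -/
structure Network where
  E : Type
  V : Type
  finE : Finite E
  finV : Finite V
  src : E → Option V
  tgt : E → Option V

namespace Network

variable (N : Network)

/-- One step of a path: the target of `e` is the source of `e'`. -/
def step (e e' : N.E) : Prop := ∃ v : N.V, N.tgt e = some v ∧ N.src e' = some v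

/-- There is a path from `e` to `e'`. -/
def PathTo (e e' : N.E) : Prop := Relation.ReflTransGen N.step e e'

/-- A network is acyclic if there is no nontrivial path from an edge to itself. -/
def Acyclic : Prop := ∀ e : N.E, ¬ Relation.TransGen N.step e e

/-- A network is linear if it is acyclic and consists of a single path
`e_0, v_1, e_1, …, v_k, e_k`. -/
def Linear : Prop := N.Acyclic ∧
  ∃ (k : ℕ) (e : Fin (k + 1) ≃ N.E) (v : Fin k ≃ N.V),
    N.src (e 0) = none ∧ N.tgt (e (Fin.last k)) = none ∧
    ∀ i : Fin k, N.tgt (e i.castSucc) = some (v i) ∧ N.src (e i.succ) = some (v i)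

/-- A network is confluent if it is acyclic, has a unique output edge, and every
vertex is the source of exactly one edge and the target of at least one edge. -/
def Confluent : Prop := N.Acyclic ∧ (∃! e : N.E, N.tgt e = none) ∧
  (∀ v : N.V, ∃! e : N.E, N.src e = some v) ∧ (∀ v : N.V, ∃ e : N.E, N.tgt e = some v)

end Network

/-- An opetopic network: an acyclic network with a unique output edge, together with
thin edges (which are inputs) and thin vertices (each the target of exactly one edge,
which is not thin). -/
structure OpetopicNetwork extends Network where
  thinE : E → Prop
  thinV : V → Prop
  acyclic : toNetwork.Acyclic
  out_unique : ∃! e : E, tgt e = none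
  thinE_input : ∀ e, thinE e → src e = none
  thinV_unique : ∀ v, thinV v → ∃! e, tgt e = some v
  thinV_nonthin : ∀ v e, thinV v → tgt e = some v → ¬ thinE e

/-- An opetopic network is reduced if every thin edge has a target vertex which is
the target of no other edge. -/
def OpetopicNetwork.Reduced (N : OpetopicNetwork) : Prop :=
  ∀ e, N.thinE e → ∃ v, N.tgt e = some v ∧ ∀ e', N.tgt e' = some v → e' = e

/-- `c` is a constellation from `N` to `P`: a bijection from the vertices of `N` to
the input edges of `P`, preserving thinness, such that for every edge `e` of `P`
there is exactly one edge of `N` with a source but not a target in the preimage of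
`I_e` (the input edges of `P` from which there is a path to `e`). -/
def IsConstellation (N P : OpetopicNetwork) (c : N.V → P.E) : Prop :=
  (∀ v, P.src (c v) = none) ∧
  Function.Injective c ∧
  (∀ e : P.E, P.src e = none → ∃ v, c v = e) ∧
  (∀ v, N.thinV v ↔ P.thinE (c v)) ∧
  (∀ e : P.E, ∃! e' : N.E,
    (∃ v, N.src e' = some v ∧ P.toNetwork.PathTo (c v) e) ∧
    ¬ (∃ v, N.tgt e' = some v ∧ P.toNetwork.PathTo (c v) e))

/-- An `n`-dimensional opetopic sequence `N_0 → N_1 → … → N_n`. -/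
structure OpetopicSequence (n : ℕ) where
  N : Fin (n + 1) → OpetopicNetwork
  c : ∀ q : Fin n, (N q.castSucc).V → (N q.succ).E
  constell : ∀ q : Fin n, IsConstellation (N q.castSucc) (N q.succ) (c q)
  linear0 : (N 0).toNetwork.Linear
  noThin0 : ∀ e, ¬ (N 0).thinE e
  top_single : ∃! _e : (N (Fin.last n)).E, True
  top_noV : IsEmpty (N (Fin.last n)).V

/-- An isomorphism of opetopic sequences: families of bijections on edges and
vertices preserving sources, targets, thin edges and thin vertices, and commuting
with the constellations. -/
def SeqIso (n : ℕ) (S S' : OpetopicSequence n) : Prop :=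
  ∃ (fE : ∀ q : Fin (n + 1), (S.N q).E ≃ (S'.N q).E)
    (fV : ∀ q : Fin (n + 1), (S.N q).V ≃ (S'.N q).V),
    (∀ q : Fin (n + 1),
      (∀ e v, (S.N q).src e = some v ↔ (S'.N q).src (fE q e) = some (fV q v)) ∧
      (∀ e v, (S.N q).tgt e = some v ↔ (S'.N q).tgt (fE q e) = some (fV q v)) ∧
      (∀ e, (S.N q).thinE e ↔ (S'.N q).thinE (fE q e)) ∧
      (∀ v, (S.N q).thinV v ↔ (S'.N q).thinV (fV q v))) ∧
    (∀ q : Fin n, ∀ v, fE q.succ (S.c q v) = S'.c q (fV q.castSucc v))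

/-- The opetopic sequence `S` realizes the sequence
`G_0^-(⟨K⟩) → … → G_n^-(⟨K⟩)` associated to the opetopic directed complex `K`
(with top basis element `g` and thin elements `thin`): the edges of `S.N q`
correspond bijectively to the terms of `g_q^-(⟨K⟩)`, the vertices to the terms of
`⟨K⟩_{q+1}^-`, sources, targets and thinness are as prescribed by `∂⁺`, `∂⁻` and
`thin`, and the constellations are the identity correspondences. -/
def RealizedBy (K : FADC) (thin : K.B → Prop) (n : ℕ) (g : K.B)
    (S : OpetopicSequence n) : Prop :=
  ∃ (eE : ∀ q : Fin (n + 1), (S.N q).E → K.B)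
    (eV : ∀ q : Fin (n + 1), (S.N q).V → K.B),
    (∀ q : Fin (n + 1),
      Function.Injective (eE q) ∧
      (∀ ed, eE q ed ∈ (K.gch (K.atomNeg g n q.1) (K.atomNeg g n (q.1 + 1))).support) ∧
      (∀ b ∈ (K.gch (K.atomNeg g n q.1) (K.atomNeg g n (q.1 + 1))).support,
        ∃ ed, eE q ed = b) ∧
      Function.Injective (eV q) ∧
      (∀ v, eV q v ∈ (K.atomNeg g n (q.1 + 1)).support) ∧
      (∀ b ∈ (K.atomNeg g n (q.1 + 1)).support, ∃ v, eV q v = b) ∧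
      (∀ ed v, (S.N q).src ed = some v ↔
        eE q ed ∈ (K.bdp (Finsupp.single (eV q v) 1)).support) ∧
      (∀ ed v, (S.N q).tgt ed = some v ↔
        eE q ed ∈ (K.bdm (Finsupp.single (eV q v) 1)).support) ∧
      (∀ ed, (S.N q).thinE ed ↔ thin (eE q ed)) ∧
      (∀ v, (S.N q).thinV v ↔ thin (eV q v))) ∧
    (∀ q : Fin n, ∀ v, eE q.succ (S.c q v) = eV q.castSucc v)

/-- A bundled `n`-dimensional opetopic directed complex. -/
structure ODCBundle (n : ℕ) where
  K : FADC
  thin : K.B → Prop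
  g : K.B
  dim_g : K.dim g = n
  isODC : IsODC K thin n

/-- Isomorphism of (bundled) opetopic directed complexes: a dimension- and
thinness-preserving bijection of bases commuting with boundaries and augmentations. -/
def ODCIso {n : ℕ} (A A' : ODCBundle n) : Prop :=
  ∃ φ : A.K.B ≃ A'.K.B,
    (∀ b, A'.K.dim (φ b) = A.K.dim b) ∧
    (∀ b, A'.thin (φ b) ↔ A.thin b) ∧
    (∀ b, A'.K.bd (φ b) = Finsupp.equivMapDomain φ (A.K.bd b)) ∧
    (∀ b, A'.K.eps (φ b) = A.K.eps b)

section Aux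

variable {K : FADC}

lemma bdc_zero : K.bdc 0 = 0 := Finsupp.sum_zero_index

lemma bdc_add (c d : K.B →₀ ℤ) : K.bdc (c + d) = K.bdc c + K.bdc d :=
  Finsupp.sum_add_index' (fun a => zero_smul ℤ _) (fun a m n => add_smul m n _)

lemma bdc_smul (n : ℤ) (c : K.B →₀ ℤ) : K.bdc (n • c) = n • K.bdc c := by
  unfold FADC.bdc
  rw [Finsupp.sum_smul_index', Finsupp.smul_sum]
  · exact Finsupp.sum_congr fun i _ => by rw [smul_eq_mul, mul_smul]
  · exact fun a => zero_smul ℤ _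

lemma bdc_sum {ι : Type*} (s : Finset ι) (f : ι → (K.B →₀ ℤ)) :
    K.bdc (∑ i ∈ s, f i) = ∑ i ∈ s, K.bdc (f i) :=
  map_sum (AddMonoidHom.mk' K.bdc bdc_add) f s

lemma bdc_single (a : K.B) : K.bdc (Finsupp.single a 1) = K.bd a := by
  unfold FADC.bdc
  rw [Finsupp.sum_single_index, one_smul]
  exact zero_smul ℤ _

lemma bdc_bd (a : K.B) : K.bdc (K.bd a) = 0 := K.bd_bd a

lemma epsc_zero : K.epsc 0 = 0 := Finsupp.sum_zero_index

lemma epsc_add (c d : K.B →₀ ℤ) : K.epsc (c + d) = K.epsc c + K.epsc d :=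
  Finsupp.sum_add_index' (fun a => zero_mul _) (fun a m n => add_mul m n _)

lemma epsc_smul (n : ℤ) (c : K.B →₀ ℤ) : K.epsc (n • c) = n * K.epsc c := by
  unfold FADC.epsc
  rw [Finsupp.sum_smul_index', Finsupp.mul_sum]
  · exact Finsupp.sum_congr fun i _ => by rw [smul_eq_mul, mul_assoc]
  · exact fun a => zero_mul _

lemma epsc_sum {ι : Type*} (s : Finset ι) (f : ι → (K.B →₀ ℤ)) :
    K.epsc (∑ i ∈ s, f i) = ∑ i ∈ s, K.epsc (f i) :=
  map_sum (AddMonoidHom.mk' K.epsc epsc_add) f s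

lemma epsc_single (a : K.B) : K.epsc (Finsupp.single a 1) = K.eps a := by
  unfold FADC.epsc
  rw [Finsupp.sum_single_index, one_mul]
  exact zero_mul _

lemma epsc_bd (a : K.B) : K.epsc (K.bd a) = 0 := K.eps_bd a

lemma bdp_single_apply (a b : K.B) :
    K.bdp (Finsupp.single a 1) b = max (K.bd a b) 0 := by
  unfold FADC.bdp
  rw [Finsupp.mapRange_apply, bdc_single]

lemma bdm_single_apply (a b : K.B) :
    K.bdm (Finsupp.single a 1) b = max (-(K.bd a b)) 0 := by
  unfold FADC.bdm
  rw [Finsupp.mapRange_apply, Finsupp.neg_apply, bdc_single]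

lemma bdm_zero : K.bdm 0 = 0 := by
  unfold FADC.bdm
  rw [bdc_zero, neg_zero]
  ext b
  simp

lemma bdc_apply (c : K.B →₀ ℤ) (b : K.B) :
    K.bdc c b = ∑ a ∈ c.support, c a * K.bd a b := by
  unfold FADC.bdc
  rw [Finsupp.sum_apply, Finsupp.sum]
  exact Finset.sum_congr rfl fun a _ => by rw [Finsupp.smul_apply, smul_eq_mul]

lemma gch_apply (u z : K.B →₀ ℤ) (b : K.B) :
    K.gch u z b = u b + ∑ a ∈ z.support, z a * K.bdp (Finsupp.single a 1) b := by
  unfold FADC.gch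
  rw [Finsupp.add_apply, Finsupp.sum_apply, Finsupp.sum]
  try exact congrArg _ (Finset.sum_congr rfl fun a _ => by rw [Finsupp.smul_apply, smul_eq_mul])

lemma max_sub_max (x : ℤ) : max x 0 - max (-x) 0 = x := by
  rcases le_total x 0 with h | h
  · rw [max_eq_right h, max_eq_left (by omega : (0:ℤ) ≤ -x)]; omega
  · rw [max_eq_left h, max_eq_right (by omega : -x ≤ (0:ℤ))]; omega

lemma balance {u v z : K.B →₀ ℤ} (hbd : K.bdc z = v - u) (b : K.B) :
    u b + ∑ a ∈ z.support, z a * K.bd a b = v b := by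
  have h := congrArg (fun c : K.B →₀ ℤ => c b) hbd
  simp only [Finsupp.sub_apply] at h
  rw [bdc_apply] at h
  omega

lemma gch_apply' {u v : K.B →₀ ℤ} (z : K.B →₀ ℤ) (hbd : K.bdc z = v - u) (b : K.B) :
    K.gch u z b = v b + ∑ a ∈ z.support, z a * K.bdm (Finsupp.single a 1) b := by
  rw [gch_apply]
  have hb := balance hbd b
  have hsplit : ∑ a ∈ z.support, z a * K.bd a b
      = ∑ a ∈ z.support, z a * K.bdp (Finsupp.single a 1) b
        - ∑ a ∈ z.support, z a * K.bdm (Finsupp.single a 1) b := by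
    rw [← Finset.sum_sub_distrib]
    exact Finset.sum_congr rfl fun a _ => by
      rw [bdp_single_apply, bdm_single_apply, ← mul_sub, max_sub_max]
  omega

end Aux
lemma sliceLem (K : FADC) (hLF : K.LoopFree) (xm xp : ℕ → (K.B →₀ ℤ)) (hx : NuMem K xm xp)
    (q : ℕ) (z : K.B →₀ ℤ) (hz0 : ∀ b, 0 ≤ z b) (hzd : ∀ b ∈ z.support, K.dim b = q + 1)
    (hbd : K.bdc z = xp q - xm q) (b₀ : K.B) :
    ∃ ym yp, NuMem K ym yp ∧ ym q b₀ = K.gch (xm q) z b₀ := by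
  classical
  obtain ⟨lt, hso, hlf⟩ := hLF
  have hirr : ∀ b, ¬ lt b b := fun b => hso.toIrrefl.irrefl b
  have htr : ∀ a b c, lt a b → lt b c → lt a c := fun a b c => hso.toIsTrans.trans a b c
  have hlf1 : ∀ a : K.B, ∀ b ∈ (K.bdm (Finsupp.single a 1)).support,
      ∀ b' ∈ (K.bdp (Finsupp.single a 1)).support, lt b b' := by
    intro a b hb b' hb'
    exact hlf a 1 one_pos b (by simpa using hb) b' (by simpa using hb')
  set S := z.support with hS
  set prec : K.B → K.B → Prop := fun a a' =>
    ∃ b, b ∈ (K.bdp (Finsupp.single a 1)).support ∧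
      b ∈ (K.bdm (Finsupp.single a' 1)).support with hprec
  have chainlem : ∀ a a', Relation.TransGen prec a a' →
      ∃ b b', b ∈ (K.bdp (Finsupp.single a 1)).support ∧
        b' ∈ (K.bdm (Finsupp.single a' 1)).support ∧ (b = b' ∨ lt b b') := by
    intro a a' h
    induction h with
    | single h => obtain ⟨b, h1, h2⟩ := h; exact ⟨b, b, h1, h2, Or.inl rfl⟩
    | tail h1 h2 ih =>
        obtain ⟨b1, b2, hb1, hb2, hle⟩ := ih
        obtain ⟨e, he1, he2⟩ := h2
        refine ⟨b1, e, hb1, he2, Or.inr ?_⟩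
        have h2e : lt b2 e := hlf1 _ b2 hb2 e he1
        rcases hle with rfl | h
        · exact h2e
        · exact htr _ _ _ h h2e
  set P : K.B → Prop := fun a => ∃ p ∈ S, b₀ ∈ (K.bdp (Finsupp.single p 1)).support ∧
      Relation.ReflTransGen prec a p with hP
  set T : Finset K.B := S.filter P with hT
  have hTsub : T ⊆ S := Finset.filter_subset _ _
  have hprodT : ∀ a ∈ S, b₀ ∈ (K.bdp (Finsupp.single a 1)).support → a ∈ T := by
    intro a ha h
    exact Finset.mem_filter.2 ⟨ha, a, ha, h, Relation.ReflTransGen.refl⟩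
  have hdc : ∀ a ∈ S, ∀ a' ∈ T, prec a a' → a ∈ T := by
    intro a ha a' ha' hp
    obtain ⟨_, p, hpS, hpb, hrt⟩ := Finset.mem_filter.1 ha'
    exact Finset.mem_filter.2 ⟨ha, p, hpS, hpb, Relation.ReflTransGen.head hp hrt⟩
  have hnocons : ∀ a ∈ T, b₀ ∉ (K.bdm (Finsupp.single a 1)).support := by
    intro a haT hmem
    obtain ⟨_, p, hpS, hpb, hrt⟩ := Finset.mem_filter.1 haT
    rcases (Relation.reflTransGen_iff_eq_or_transGen.1 hrt) with heq | htg
    · subst heq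
      exact hirr b₀ (hlf1 p b₀ hmem b₀ hpb)
    · obtain ⟨b1, b2, hb1, hb2, hle⟩ := chainlem a p htg
      have l1 : lt b₀ b1 := hlf1 a b₀ hmem b1 hb1
      have l2 : lt b2 b₀ := hlf1 p b2 hb2 b₀ hpb
      rcases hle with rfl | h
      · exact hirr b₀ (htr _ _ _ l1 l2)
      · exact hirr b₀ (htr _ _ _ (htr _ _ _ l1 h) l2)
  set cT : K.B →₀ ℤ := xm q + ∑ a ∈ T, z a • K.bd a with hcT
  have cT_apply : ∀ b, cT b = xm q b + ∑ a ∈ T, z a * K.bd a b := by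
    intro b
    rw [hcT, Finsupp.add_apply, Finsupp.finset_sum_apply]
    exact congrArg _ (Finset.sum_congr rfl fun a _ => by rw [Finsupp.smul_apply, smul_eq_mul])
  have hbal : ∀ b, xm q b + ∑ a ∈ S, z a * K.bd a b = xp q b := fun b => balance hbd b
  -- nonnegativity of cT
  have hnn : ∀ b, 0 ≤ cT b := by
    intro b
    rw [cT_apply]
    by_cases hc : ∃ a ∈ T, K.bd a b < 0
    · obtain ⟨a', ha'T, hneg⟩ := hc
      have hrest : ∀ a ∈ S.filter (fun a => ¬ P a), z a * K.bd a b ≤ 0 := by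
        intro a ha
        obtain ⟨haS, hnP⟩ := Finset.mem_filter.1 ha
        have hbnp : K.bd a b ≤ 0 := by
          by_contra hgt
          push_neg at hgt
          have hmem1 : b ∈ (K.bdp (Finsupp.single a 1)).support := by
            rw [Finsupp.mem_support_iff, bdp_single_apply]; omega
          have hmem2 : b ∈ (K.bdm (Finsupp.single a' 1)).support := by
            rw [Finsupp.mem_support_iff, bdm_single_apply]; omega
          have : a ∈ T := hdc a haS a' ha'T ⟨b, hmem1, hmem2⟩
          exact hnP (Finset.mem_filter.1 this).2
        exact mul_nonpos_iff.2 (Or.inl ⟨hz0 a, hbnp⟩)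
      have hsplit := Finset.sum_filter_add_sum_filter_not S P (fun a => z a * K.bd a b)
      have h1 : ∑ a ∈ S.filter (fun a => ¬ P a), z a * K.bd a b ≤ 0 :=
        Finset.sum_nonpos hrest
      have h2 := hbal b
      have h3 := hx.nonneg_p q b
      rw [← hT] at hsplit
      omega
    · push_neg at hc
      have h1 : 0 ≤ ∑ a ∈ T, z a * K.bd a b :=
        Finset.sum_nonneg fun a ha => mul_nonneg (hz0 a) (hc a ha)
      have h2 := hx.nonneg_m q b
      omega
  -- value at b₀
  have hval : cT b₀ = K.gch (xm q) z b₀ := by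
    rw [cT_apply, gch_apply]
    congr 1
    have h1 : ∀ a ∈ T, K.bd a b₀ = K.bdp (Finsupp.single a 1) b₀ := by
      intro a haT
      have h := hnocons a haT
      rw [Finsupp.mem_support_iff, bdm_single_apply] at h
      push_neg at h
      rw [bdp_single_apply]
      omega
    calc ∑ a ∈ T, z a * K.bd a b₀
        = ∑ a ∈ T, z a * K.bdp (Finsupp.single a 1) b₀ :=
          Finset.sum_congr rfl (fun a ha => by rw [h1 a ha])
      _ = ∑ a ∈ S, z a * K.bdp (Finsupp.single a 1) b₀ := by
          refine Finset.sum_subset hTsub fun a haS haT => ?_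
          have h0 : K.bdp (Finsupp.single a 1) b₀ = 0 := by
            by_contra h
            exact haT (hprodT a haS (Finsupp.mem_support_iff.2 h))
          rw [h0, mul_zero]
  -- boundary of cT
  have hbdcT : K.bdc cT = K.bdc (xm q) := by
    rw [hcT, bdc_add, bdc_sum]
    have : ∀ a ∈ T, K.bdc (z a • K.bd a) = 0 := by
      intro a _
      rw [bdc_smul, bdc_bd, smul_zero]
    rw [Finset.sum_congr rfl this, Finset.sum_const_zero, add_zero]
  -- dimensions
  have hdim : ∀ b ∈ cT.support, K.dim b = q := by
    intro b hb
    rw [Finsupp.mem_support_iff] at hb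
    by_contra hne
    apply hb
    rw [cT_apply]
    have h1 : xm q b = 0 := by
      by_contra h
      exact hne (hx.dim_m q b (Finsupp.mem_support_iff.2 h))
    have h2 : ∀ a ∈ T, K.bd a b = 0 := by
      intro a haT
      by_contra h
      have hda := hzd a (hTsub haT)
      have := K.bd_dim a b (Finsupp.mem_support_iff.2 h)
      omega
    rw [h1, zero_add]
    exact Finset.sum_eq_zero fun a ha => by rw [h2 a ha, mul_zero]
  -- epsilon
  have hepsT : K.epsc cT = K.epsc (xm q) := by
    rw [hcT, epsc_add, epsc_sum]
    have : ∀ a ∈ T, K.epsc (z a • K.bd a) = 0 := by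
      intro a _
      rw [epsc_smul, epsc_bd, mul_zero]
    rw [Finset.sum_congr rfl this, Finset.sum_const_zero, add_zero]
  refine ⟨fun r => if r < q then xm r else if r = q then cT else 0,
          fun r => if r < q then xp r else if r = q then cT else 0, ?_, ?_⟩
  · constructor
    · intro r b hb
      rcases lt_trichotomy r q with h | h | h
      · rw [if_pos h] at hb; exact hx.dim_m r b hb
      · subst h; rw [if_neg (lt_irrefl r), if_pos rfl] at hb; exact hdim b hb
      · rw [if_neg (by omega), if_neg (by omega)] at hb; simp at hb
    · intro r b hb
      rcases lt_trichotomy r q with h | h | h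
      · rw [if_pos h] at hb; exact hx.dim_p r b hb
      · subst h; rw [if_neg (lt_irrefl r), if_pos rfl] at hb; exact hdim b hb
      · rw [if_neg (by omega), if_neg (by omega)] at hb; simp at hb
    · intro r b
      rcases lt_trichotomy r q with h | h | h
      · rw [if_pos h]; exact hx.nonneg_m r b
      · subst h; rw [if_neg (lt_irrefl r), if_pos rfl]; exact hnn b
      · rw [if_neg (by omega), if_neg (by omega)]; simp
    · intro r b
      rcases lt_trichotomy r q with h | h | h
      · rw [if_pos h]; exact hx.nonneg_p r b
      · subst h; rw [if_neg (lt_irrefl r), if_pos rfl]; exact hnn b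
      · rw [if_neg (by omega), if_neg (by omega)]; simp
    · refine ⟨q, fun r hr => ?_⟩
      have h1 : ¬ r < q := by omega
      have h2 : ¬ r = q := by omega
      simp only [if_neg h1, if_neg h2]
      exact ⟨by trivial, by trivial⟩
    · rcases Nat.eq_zero_or_pos q with h | h
      · subst h
        rw [if_neg (lt_irrefl 0), if_pos rfl, hepsT]
        exact hx.eps_m
      · rw [if_pos h]; exact hx.eps_m
    · rcases Nat.eq_zero_or_pos q with h | h
      · subst h
        rw [if_neg (lt_irrefl 0), if_pos rfl, hepsT]
        exact hx.eps_m
      · rw [if_pos h]; exact hx.eps_p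
    · intro r
      by_cases h1 : r + 1 < q
      · have h2 : r < q := by omega
        simp only [if_pos h1, if_pos h2]
        exact hx.bd_m r
      · by_cases h3 : r + 1 = q
        · have h2 : r < q := by omega
          simp only [if_neg h1, if_pos h3, if_pos h2]
          rw [hbdcT, ← h3]
          exact hx.bd_m r
        · have h5 : ¬ r < q := by omega
          by_cases h4 : r = q
          · simp only [if_neg h1, if_neg h3, if_neg h5, if_pos h4, bdc_zero, sub_self]
          · simp only [if_neg h1, if_neg h3, if_neg h5, if_neg h4, bdc_zero, sub_self]
    · intro r
      by_cases h1 : r + 1 < q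
      · have h2 : r < q := by omega
        simp only [if_pos h1, if_pos h2]
        exact hx.bd_p r
      · by_cases h3 : r + 1 = q
        · have h2 : r < q := by omega
          simp only [if_neg h1, if_pos h3, if_pos h2]
          rw [hbdcT, ← h3]
          exact hx.bd_m r
        · have h5 : ¬ r < q := by omega
          by_cases h4 : r = q
          · simp only [if_neg h1, if_neg h3, if_neg h5, if_pos h4, bdc_zero, sub_self]
          · simp only [if_neg h1, if_neg h3, if_neg h5, if_neg h4, bdc_zero, sub_self]
  · show (if q < q then xm q else if q = q then cT else 0) b₀ = K.gch (xm q) z b₀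
    rw [if_neg (lt_irrefl q), if_pos rfl]
    exact hval
lemma goodLem (K : FADC) (hLF : K.LoopFree) (hU : K.Unital) :
    ∀ q (xm xp : ℕ → (K.B →₀ ℤ)), NuMem K xm xp → ∀ b, xm q b ≤ 1 := by
  intro q
  induction q with
  | zero =>
    intro xm xp hx b
    by_contra h
    push_neg at h
    have hb : b ∈ (xm 0).support := Finsupp.mem_support_iff.2 (by omega)
    have heps1 : ∀ c ∈ (xm 0).support, K.eps c = 1 := by
      intro c hc
      have hd : K.dim c = 0 := hx.dim_m 0 c hc
      have h1 := (hU c).1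
      rw [hd, Function.iterate_zero, id_eq, epsc_single] at h1
      exact h1
    have hsum : K.epsc (xm 0) = ∑ c ∈ (xm 0).support, xm 0 c * K.eps c := rfl
    have hsum2 : K.epsc (xm 0) = ∑ c ∈ (xm 0).support, xm 0 c := by
      rw [hsum]
      exact Finset.sum_congr rfl fun c hc => by rw [heps1 c hc, mul_one]
    have hle : xm 0 b ≤ ∑ c ∈ (xm 0).support, xm 0 c :=
      Finset.single_le_sum (fun c _ => hx.nonneg_m 0 c) hb
    have := hx.eps_m
    omega
  | succ q ih =>
    intro xm xp hx a₀
    by_contra h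
    push_neg at h
    have ha₀S : a₀ ∈ (xm (q + 1)).support := Finsupp.mem_support_iff.2 (by omega)
    have hdima₀ : K.dim a₀ = q + 1 := hx.dim_m _ _ ha₀S
    have hbdm_ne : (K.bdm (Finsupp.single a₀ 1)).support.Nonempty := by
      rw [Finsupp.support_nonempty_iff]
      intro h0
      have h1 := (hU a₀).1
      rw [hdima₀, Function.iterate_succ_apply, h0] at h1
      have h2 : K.bdm^[q] (0 : K.B →₀ ℤ) = 0 := Function.iterate_fixed bdm_zero q
      rw [h2, epsc_zero] at h1
      exact absurd h1 (by norm_num)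
    obtain ⟨b₀, hb₀⟩ := hbdm_ne
    obtain ⟨ym', yp', hy, hval⟩ := sliceLem K hLF xm xp hx q (xm (q + 1))
      (hx.nonneg_m _) (hx.dim_m _) (hx.bd_m q) b₀
    have h1 : ym' q b₀ ≤ 1 := ih ym' yp' hy b₀
    have h2 : 2 ≤ K.gch (xm q) (xm (q + 1)) b₀ := by
      rw [gch_apply' (xm (q + 1)) (hx.bd_m q)]
      have h3 : 1 ≤ K.bdm (Finsupp.single a₀ 1) b₀ := by
        have h4 := Finsupp.mem_support_iff.1 hb₀
        rw [bdm_single_apply] at h4 ⊢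
        omega
      have hterm : 2 ≤ xm (q + 1) a₀ * K.bdm (Finsupp.single a₀ 1) b₀ := by
        nlinarith
      have hsum : xm (q + 1) a₀ * K.bdm (Finsupp.single a₀ 1) b₀
          ≤ ∑ a ∈ (xm (q + 1)).support, xm (q + 1) a * K.bdm (Finsupp.single a 1) b₀ :=
        Finset.single_le_sum (fun a _ => mul_nonneg (hx.nonneg_m _ a)
          (by rw [bdm_single_apply]; exact le_max_right _ _)) ha₀S
      have := hx.nonneg_p q b₀
      omega
    omega
/-- Theorem 4.1(2): if `K` is loop-free and unital and `x ∈ νK`, then each of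
`x_q^-`, `x_q^+`, `g_q^-(x)` and `g_q^+(x)` is a sum of distinct basis elements,
i.e. has all coordinates in `{0, 1}`. -/
theorem stmt7 (K : FADC) (hLF : K.LoopFree) (hU : K.Unital)
    (xm xp : ℕ → (K.B →₀ ℤ)) (hx : NuMem K xm xp) (q : ℕ) :
    ∀ b : K.B,
      (xm q b = 0 ∨ xm q b = 1) ∧
      (xp q b = 0 ∨ xp q b = 1) ∧
      (K.gch (xm q) (xm (q + 1)) b = 0 ∨ K.gch (xm q) (xm (q + 1)) b = 1) ∧
      (K.gch (xm q) (xp (q + 1)) b = 0 ∨ K.gch (xm q) (xp (q + 1)) b = 1) := by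
  intro b
  have hnm := hx.nonneg_m q b
  have hnp := hx.nonneg_p q b
  obtain ⟨ym1, yp1, hy1, hval1⟩ := sliceLem K hLF xm xp hx q (xm (q + 1))
    (hx.nonneg_m _) (hx.dim_m _) (hx.bd_m q) b
  obtain ⟨ym2, yp2, hy2, hval2⟩ := sliceLem K hLF xm xp hx q (xp (q + 1))
    (hx.nonneg_p _) (hx.dim_p _) (hx.bd_p q) b
  have hg1le : K.gch (xm q) (xm (q + 1)) b ≤ 1 := by
    rw [← hval1]; exact goodLem K hLF hU q ym1 yp1 hy1 b
  have hg2le : K.gch (xm q) (xp (q + 1)) b ≤ 1 := by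
    rw [← hval2]; exact goodLem K hLF hU q ym2 yp2 hy2 b
  have hg1ge : 0 ≤ K.gch (xm q) (xm (q + 1)) b := by
    rw [← hval1]; exact hy1.nonneg_m q b
  have hg2ge : 0 ≤ K.gch (xm q) (xp (q + 1)) b := by
    rw [← hval2]; exact hy2.nonneg_m q b
  have hle1 : xm q b ≤ K.gch (xm q) (xm (q + 1)) b := by
    rw [gch_apply]
    have h0 : 0 ≤ ∑ a ∈ (xm (q + 1)).support, xm (q + 1) a * K.bdp (Finsupp.single a 1) b :=
      Finset.sum_nonneg fun a _ => mul_nonneg (hx.nonneg_m _ a)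
        (by rw [bdp_single_apply]; exact le_max_right _ _)
    omega
  have hle2 : xp q b ≤ K.gch (xm q) (xp (q + 1)) b := by
    rw [gch_apply' (xp (q + 1)) (hx.bd_p q)]
    have h0 : 0 ≤ ∑ a ∈ (xp (q + 1)).support, xp (q + 1) a * K.bdm (Finsupp.single a 1) b :=
      Finset.sum_nonneg fun a _ => mul_nonneg (hx.nonneg_p _ a)
        (by rw [bdm_single_apply]; exact le_max_right _ _)
    omega
  exact ⟨by omega, by omega, by omega, by omega⟩
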